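/- Let L be an infinite geometric lattice of finite height such that |[0,x]| < |L| for every element x of rank 2. If |L| is a regular cardinal, then L has a matching. -/

import Mathlib

universe u

/-- An element of a poset is an *atom* (point) if it is an upper cover of a least element. -/
def IsAtomP {P : Type*} [PartialOrder P] (a : P) : Prop :=
  ∃ z : P, (∀ w, z ≤ w) ∧ z ⋖ a

/-- An element of a poset is a *coatom* (hyperplane) if it is a lower cover of a greatest
element. -/
def IsCoatomP {P : Type*} [PartialOrder P] (a : P) : Prop :=
  ∃ z : P, (∀ w, w ≤ z) ∧ a ⋖ z

/-- A partial order is a *geometric lattice of finite height* if it is a lattice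
(binary joins and meets exist), has no infinite chains, is semimodular, and every
element is a join (least upper bound) of a set of atoms. -/
def IsGeomLatFH (P : Type*) [PartialOrder P] : Prop :=
  (∀ x y : P, ∃ z, IsLUB {x, y} z) ∧
  (∀ x y : P, ∃ z, IsGLB {x, y} z) ∧
  (∀ c : Set P, IsChain (· ≤ ·) c → c.Finite) ∧
  (∀ a b c : P, a ⋖ b → a ⋖ c → b ≠ c → ∃ d, b ⋖ d ∧ c ⋖ d) ∧
  (∀ x : P, ∃ S : Set P, (∀ a ∈ S, IsAtomP a) ∧ IsLUB S x)

/-- `r` is the rank (height) function of a graded bounded poset: `r ⊥ = 0` and `r`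
increases by exactly one across covering pairs. -/
def IsRankFn {L : Type*} [PartialOrder L] [OrderBot L] (r : L → ℕ) : Prop :=
  r ⊥ = 0 ∧ ∀ x y : L, x ⋖ y → r y = r x + 1

/-- A *matching* of a lattice: an injection from atoms to coatoms (hyperplanes) such
that each atom lies below its image. -/
def HasMatching (L : Type*) [CompleteLattice L] : Prop :=
  ∃ f : {a : L // IsAtom a} → {h : L // IsCoatom h},
    Function.Injective f ∧ ∀ a : {a : L // IsAtom a}, (a : L) ≤ ((f a : {h : L // IsCoatom h}) : L)

open Cardinal

namespace GeomMatch

variable {L : Type u} [CompleteLattice L]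

section basic

variable (hch : ∀ c : Set L, IsChain (· ≤ ·) c → c.Finite)

include hch

lemma wf_lt : WellFounded ((· < ·) : L → L → Prop) := by
  rw [RelEmbedding.wellFounded_iff_isEmpty]
  constructor
  intro f
  have hc : IsChain (· ≤ ·) (Set.range f) := by
    rintro _ ⟨m, rfl⟩ _ ⟨n, rfl⟩ _
    rcases lt_trichotomy m n with h | h | h
    · right; exact le_of_lt (f.map_rel_iff.2 h)
    · left; exact le_of_eq (congrArg f h)
    · left; exact le_of_lt (f.map_rel_iff.2 h)
  exact absurd (hch _ hc) (Set.infinite_range_of_injective f.injective)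

lemma wf_gt : WellFounded ((· > ·) : L → L → Prop) := by
  rw [RelEmbedding.wellFounded_iff_isEmpty]
  constructor
  intro f
  have hc : IsChain (· ≤ ·) (Set.range f) := by
    rintro _ ⟨m, rfl⟩ _ ⟨n, rfl⟩ _
    rcases lt_trichotomy m n with h | h | h
    · left; exact le_of_lt (f.map_rel_iff.2 h)
    · left; exact le_of_eq (congrArg f h)
    · right; exact le_of_lt (f.map_rel_iff.2 h)
  exact absurd (hch _ hc) (Set.infinite_range_of_injective f.injective)

lemma exists_covBy_le {x y : L} (h : x < y) : ∃ z, x ⋖ z ∧ z ≤ y := by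
  obtain ⟨m, ⟨hxm, hmy⟩, hmin⟩ := (wf_lt hch).has_min {z | x < z ∧ z ≤ y} ⟨y, h, le_rfl⟩
  refine ⟨m, ⟨hxm, fun c hc hc' => ?_⟩, hmy⟩
  exact hmin c ⟨hc, hc'.le.trans hmy⟩ hc'

lemma exists_le_covBy {x y : L} (h : x < y) : ∃ z, x ≤ z ∧ z ⋖ y := by
  obtain ⟨m, ⟨hxm, hmy⟩, hmax⟩ := (wf_gt hch).has_min {z | x ≤ z ∧ z < y} ⟨x, le_rfl, h⟩
  refine ⟨m, hxm, hmy, fun c hc hc' => ?_⟩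
  exact hmax c ⟨hxm.trans hc.le, hc'⟩ hc

variable {r : L → ℕ} (hr : IsRankFn r)

include hr

lemma rank_lt_of_lt : ∀ {x y : L}, x < y → r x < r y := by
  intro x y
  induction y using (wf_lt hch).induction generalizing x with
  | _ y IH =>
    intro hxy
    obtain ⟨z, hxz, hzy⟩ := exists_le_covBy hch hxy
    have hz : r y = r z + 1 := hr.2 z y hzy
    rcases eq_or_lt_of_le hxz with rfl | h'
    · omega
    · have := IH z hzy.lt h'; omega

lemma eq_of_le_rank {x y : L} (hxy : x ≤ y) (h : r y ≤ r x) : x = y := by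
  rcases eq_or_lt_of_le hxy with rfl | h'
  · rfl
  · exact absurd (rank_lt_of_lt hch hr h') (by omega)

lemma covBy_of_le_rank {x y : L} (hxy : x ≤ y) (h : r y = r x + 1) : x ⋖ y := by
  have hne : x ≠ y := fun e => by rw [e] at h; omega
  obtain ⟨z, hxz, hzy⟩ := exists_le_covBy hch (lt_of_le_of_ne hxy hne)
  have hz : r y = r z + 1 := hr.2 z y hzy
  have : x = z := eq_of_le_rank hch hr hxz (by omega)
  rwa [this]

lemma eq_bot_of_rank {x : L} (h : r x = 0) : x = ⊥ := by
  have h0 := hr.1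
  exact (eq_of_le_rank hch hr bot_le (by omega)).symm

lemma isAtom_rank {a : L} (h : IsAtom a) : r a = 1 := by
  have := hr.2 ⊥ a h.bot_covBy
  have h0 := hr.1
  omega

lemma isAtom_of_rank {a : L} (h : r a = 1) : IsAtom a := by
  have h0 := hr.1
  exact bot_covBy_iff.1 (covBy_of_le_rank hch hr bot_le (by omega))

end basic

section geom

set_option linter.unusedSectionVars false

variable (hch : ∀ c : Set L, IsChain (· ≤ ·) c → c.Finite)
variable (hsm : ∀ a b c : L, a ⋖ b → a ⋖ c → b ≠ c → ∃ d, b ⋖ d ∧ c ⋖ d)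
variable (hatom : ∀ x : L, ∃ S : Set L, (∀ a ∈ S, IsAtomP a) ∧ IsLUB S x)
variable {r : L → ℕ} (hr : IsRankFn r)

include hch hsm

lemma semi_sup {a b c : L} (hab : a ⋖ b) (hac : a ⋖ c) (hbc : b ≠ c) :
    b ⋖ b ⊔ c ∧ c ⋖ b ⊔ c := by
  obtain ⟨d, hbd, hcd⟩ := hsm _ _ _ hab hac hbc
  have hle : b ⊔ c ≤ d := sup_le hbd.le hcd.le
  have hblt : b < b ⊔ c := by
    rcases lt_or_eq_of_le (le_sup_left : b ≤ b ⊔ c) with h | h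
    · exact h
    · exfalso
      have hcb : c ≤ b := by rw [h]; exact le_sup_right
      rcases lt_or_eq_of_le hcb with h' | h'
      · exact hab.2 hac.lt h'
      · exact hbc h'.symm
  have hde : b ⊔ c = d := by
    rcases lt_or_eq_of_le hle with h | h
    · exact absurd h (hbd.2 hblt)
    · exact h
  exact ⟨hde ▸ hbd, hde ▸ hcd⟩

lemma exchange {p : L} (hp : IsAtom p) : ∀ {x : L}, ¬ p ≤ x → x ⋖ x ⊔ p := by
  intro x
  induction x using (wf_lt hch).induction with
  | _ x IH =>
    intro hpx
    rcases eq_or_ne x ⊥ with rfl | hxb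
    · rw [bot_sup_eq]; exact hp.bot_covBy
    · obtain ⟨x', _, hx'x⟩ := exists_le_covBy hch hxb.bot_lt
      have hpx' : ¬ p ≤ x' := fun h => hpx (h.trans hx'x.le)
      have h1 : x' ⋖ x' ⊔ p := IH x' hx'x.lt hpx'
      have hne : x ≠ x' ⊔ p := fun h => hpx (h ▸ le_sup_right)
      have h2 := (semi_sup hch hsm hx'x h1 hne).1
      have he : x ⊔ (x' ⊔ p) = x ⊔ p := by
        rw [← sup_assoc, sup_of_le_left hx'x.le]
      rwa [he] at h2

omit hsm
include hatom

lemma sSup_atoms (x : L) : x = sSup {a : L | IsAtom a ∧ a ≤ x} := by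
  obtain ⟨S, hS, hlub⟩ := hatom x
  have h1 : sSup S ≤ sSup {a : L | IsAtom a ∧ a ≤ x} := by
    refine sSup_le_sSup fun a ha => ?_
    obtain ⟨z, hz, hza⟩ := hS a ha
    have hzb : z = ⊥ := le_antisymm (hz ⊥) bot_le
    exact ⟨bot_covBy_iff.1 (hzb ▸ hza), hlub.1 ha⟩
  exact le_antisymm (hlub.sSup_eq ▸ h1) (sSup_le fun a ha => ha.2)

lemma exists_atom_le_of_not_le {x y : L} (h : ¬ x ≤ y) :
    ∃ a : L, IsAtom a ∧ a ≤ x ∧ ¬ a ≤ y := by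
  by_contra hc
  push_neg at hc
  apply h
  conv_lhs => rw [sSup_atoms hch hatom x]
  exact sSup_le fun a ha => hc a ha.1 ha.2

include hsm

lemma exists_finset_atoms (t : L) : ∀ x : L, x ≤ t →
    ∃ s : Finset {a : L // IsAtom a ∧ a ≤ t}, x = s.sup (fun a => (a : L)) := by
  classical
  intro x
  induction x using (wf_lt hch).induction with
  | _ x IH =>
    intro hxt
    rcases eq_or_ne x ⊥ with rfl | hxb
    · exact ⟨∅, by simp⟩
    · obtain ⟨x', _, hx'x⟩ := exists_le_covBy hch hxb.bot_lt
      obtain ⟨s', hs'⟩ := IH x' hx'x.lt (hx'x.le.trans hxt)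
      obtain ⟨p, hp, hpx, hpx'⟩ := exists_atom_le_of_not_le hch hatom (hx'x.lt.not_ge)
      refine ⟨insert ⟨p, hp, hpx.trans hxt⟩ s', ?_⟩
      rw [Finset.sup_insert, ← hs']
      have h1 : p ⊔ x' ≤ x := sup_le hpx hx'x.le
      have h2 : x' < p ⊔ x' := right_lt_sup.2 hpx'
      rcases lt_or_eq_of_le h1 with h | h
      · exact absurd h (fun hh => hx'x.2 h2 hh)
      · exact h.symm

lemma le_mk_atoms (t : L) (h : ℵ₀ ≤ #(Set.Iic t)) :
    #(Set.Iic t) ≤ #{a : L // IsAtom a ∧ a ≤ t} := by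
  classical
  have key : ∀ x : Set.Iic t, ∃ s : Finset {a : L // IsAtom a ∧ a ≤ t},
      (x : L) = s.sup (fun a => (a : L)) := fun x => exists_finset_atoms hch hsm hatom t x.1 x.2
  choose F hF using key
  have hFinj : Function.Injective F := by
    intro x y hxy
    apply Subtype.ext
    rw [hF x, hF y, hxy]
  have h1 : #(Set.Iic t) ≤ #(Finset {a : L // IsAtom a ∧ a ≤ t}) := mk_le_of_injective hFinj
  rcases finite_or_infinite {a : L // IsAtom a ∧ a ≤ t} with hfin | hinf
  · exfalso
    haveI := Fintype.ofFinite {a : L // IsAtom a ∧ a ≤ t}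
    have h2 : #(Finset {a : L // IsAtom a ∧ a ≤ t}) < ℵ₀ := lt_aleph0_of_finite _
    exact absurd (h.trans h1) h2.not_ge
  · rwa [mk_finset_of_infinite] at h1

end geom

section count

set_option linter.unusedSectionVars false

variable (hch : ∀ c : Set L, IsChain (· ≤ ·) c → c.Finite)
variable (hsm : ∀ a b c : L, a ⋖ b → a ⋖ c → b ≠ c → ∃ d, b ⋖ d ∧ c ⋖ d)
variable (hatom : ∀ x : L, ∃ S : Set L, (∀ a ∈ S, IsAtomP a) ∧ IsLUB S x)
variable {r : L → ℕ} (hr : IsRankFn r)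
variable (hsmall : ∀ x : L, r x = 2 → #(Set.Iic x) < #L)
variable (hreg : (#L).IsRegular)

lemma atom_le_atom {a b : L} (ha : IsAtom a) (hb : IsAtom b) (h : b ≤ a) : b = a := by
  rcases lt_or_eq_of_le h with h' | h'
  · exact absurd (ha.2 b h') hb.1
  · exact h'

include hch hsm hatom hr hsmall hreg

/-- There are `#L` many lines through any given atom below `t`, provided `#(Iic t) = #L`. -/
lemma lines_big (t a : L) (ha : IsAtom a) (hat : a ≤ t) (hIic : #(Set.Iic t) = #L) :
    #L ≤ #{ℓ : L | r ℓ = 2 ∧ a ≤ ℓ ∧ ℓ ≤ t} := by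
  have hℵ0 : ℵ₀ ≤ #L := hreg.aleph0_le
  have hatoms : #L ≤ #{b : L // IsAtom b ∧ b ≤ t} := by
    calc #L = #(Set.Iic t) := hIic.symm
    _ ≤ _ := le_mk_atoms hch hsm hatom t (hIic ▸ hℵ0)
  by_contra hΛ
  rw [not_le] at hΛ
  set Λ := {ℓ : L | r ℓ = 2 ∧ a ≤ ℓ ∧ ℓ ≤ t} with hΛdef
  set A := {b : L // IsAtom b ∧ b ≤ t} with hAdef
  -- the cover of the atoms below t
  have cover : (Set.univ : Set A) ⊆ {b : A | b.1 = a} ∪ ⋃ (ℓ : Λ), {b : A | b.1 ≤ ℓ.1} := by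
    intro b _
    rcases eq_or_ne b.1 a with h | h
    · exact Or.inl h
    · right
      have hba : ¬ b.1 ≤ a := fun hle => h (atom_le_atom ha b.2.1 hle)
      have hcov : a ⋖ a ⊔ b.1 := exchange hch hsm b.2.1 hba
      have hr2 : r (a ⊔ b.1) = 2 := by
        have h1 := hr.2 _ _ hcov
        have h2 := isAtom_rank hch hr ha
        omega
      refine Set.mem_iUnion.2 ⟨⟨a ⊔ b.1, hr2, le_sup_left, sup_le hat b.2.2⟩, ?_⟩
      exact le_sup_right
  have h0 : #({b : A | b.1 = a}) ≤ 1 := by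
    refine mk_le_one_iff_set_subsingleton.2 ?_
    intro x hx y hy
    exact Subtype.ext (hx.trans hy.symm)
  have hfib : ∀ ℓ : Λ, #({b : A | b.1 ≤ ℓ.1}) < #L := by
    intro ℓ
    have hinj : Function.Injective
        (fun b : {b : A | b.1 ≤ ℓ.1} => (⟨b.1.1, b.2⟩ : Set.Iic ℓ.1)) := by
      intro x y hxy
      simp only [Subtype.mk.injEq] at hxy
      exact Subtype.ext (Subtype.ext (by have h := congrArg Subtype.val hxy; exact h))
    exact (mk_le_of_injective hinj).trans_lt (hsmall ℓ.1 ℓ.2.1)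
  have hsum : Cardinal.sum (fun ℓ : Λ => #({b : A | b.1 ≤ ℓ.1})) < #L :=
    Cardinal.sum_lt_of_isRegular hreg hΛ hfib
  have hbig : #L ≤ #((Set.univ : Set A)) := by rw [mk_univ]; exact hatoms
  have hle : #((Set.univ : Set A)) ≤ 1 + Cardinal.sum (fun ℓ : Λ => #({b : A | b.1 ≤ ℓ.1})) := by
    calc #((Set.univ : Set A))
        ≤ #(({b : A | b.1 = a} ∪ ⋃ (ℓ : Λ), {b : A | b.1 ≤ ℓ.1} : Set A)) :=
          mk_le_mk_of_subset cover
      _ ≤ #({b : A | b.1 = a}) + #((⋃ (ℓ : Λ), {b : A | b.1 ≤ ℓ.1} : Set A)) := mk_union_le _ _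
      _ ≤ 1 + Cardinal.sum (fun ℓ : Λ => #({b : A | b.1 ≤ ℓ.1})) :=
          add_le_add h0 mk_iUnion_le_sum_mk
  exact lt_irrefl (#L) (lt_of_le_of_lt (hbig.trans hle)
    (Cardinal.add_lt_of_lt hℵ0 (one_lt_aleph0.trans_le hℵ0) hsum))

/-- The key counting lemma: in ranks `≥ 3`, every atom lies below `#L` many coatoms of
any top section of full cardinality. -/
lemma count : ∀ n : ℕ, 3 ≤ n → ∀ t : L, r t = n → #(Set.Iic t) = #L →
    ∀ a : L, IsAtom a → a ≤ t → #L ≤ #{g : L | g ⋖ t ∧ a ≤ g} := by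
  have hℵ0 : ℵ₀ ≤ #L := hreg.aleph0_le
  intro n hn3
  induction n, hn3 using Nat.le_induction with
  | base =>
    intro t hrt hIic a ha hat
    have hΛ := lines_big hch hsm hatom hr hsmall hreg t a ha hat hIic
    have hmap : ∀ ℓ : {ℓ : L | r ℓ = 2 ∧ a ≤ ℓ ∧ ℓ ≤ t}, ℓ.1 ∈ {g : L | g ⋖ t ∧ a ≤ g} := by
      intro ℓ
      have h2 := ℓ.2.1
      exact ⟨covBy_of_le_rank hch hr ℓ.2.2.2 (by omega), ℓ.2.2.1⟩
    refine hΛ.trans (mk_le_of_injective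
      (f := fun ℓ => (⟨ℓ.1, hmap ℓ⟩ : {g : L | g ⋖ t ∧ a ≤ g})) ?_)
    intro x y hxy
    simp only [Subtype.mk.injEq] at hxy
    exact Subtype.ext hxy
  | succ n hn3 IH =>
    intro t hrt hIic a ha hat
    by_contra hH
    rw [not_le] at hH
    set H := {g : L | g ⋖ t ∧ a ≤ g} with hHdef
    have hΛ := lines_big hch hsm hatom hr hsmall hreg t a ha hat hIic
    set Λ := {ℓ : L | r ℓ = 2 ∧ a ≤ ℓ ∧ ℓ ≤ t} with hΛdef
    -- every line through a below t lies below some coatom in H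
    have cover : (Set.univ : Set Λ) ⊆ ⋃ (g : H), {ℓ : Λ | ℓ.1 ≤ g.1} := by
      intro ℓ _
      have hlt : ℓ.1 < t := by
        refine lt_of_le_of_ne ℓ.2.2.2 fun e => ?_
        have := ℓ.2.1
        rw [e, hrt] at this
        omega
      obtain ⟨z, hz, hzt⟩ := exists_le_covBy hch hlt
      exact Set.mem_iUnion.2 ⟨⟨z, hzt, ℓ.2.2.1.trans hz⟩, hz⟩
    -- some coatom g contains #L many of those lines
    have hex : ∃ g : H, #L ≤ #({ℓ : Λ | ℓ.1 ≤ g.1}) := by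
      by_contra hc
      push_neg at hc
      have h1 : #L ≤ #((Set.univ : Set Λ)) := by rw [mk_univ]; exact hΛ
      have h2 : #((Set.univ : Set Λ)) ≤ Cardinal.sum (fun g : H => #({ℓ : Λ | ℓ.1 ≤ g.1})) :=
        (mk_le_mk_of_subset cover).trans mk_iUnion_le_sum_mk
      exact lt_irrefl (#L) (lt_of_le_of_lt (h1.trans h2)
        (Cardinal.sum_lt_of_isRegular hreg hH hc))
    obtain ⟨g, hg⟩ := hex
    have hIg : #(Set.Iic g.1) = #L := by
      refine le_antisymm (mk_set_le _) (hg.trans (mk_le_of_injective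
        (f := fun ℓ : {ℓ : Λ | ℓ.1 ≤ g.1} => (⟨ℓ.1.1, ℓ.2⟩ : Set.Iic g.1)) ?_))
      intro x y hxy
      simp only [Subtype.mk.injEq] at hxy
      exact Subtype.ext (Subtype.ext (by have h := congrArg Subtype.val hxy; exact h))
    have hrg : r g.1 = n := by
      have := hr.2 _ _ g.2.1
      omega
    have hIH := IH g.1 hrg hIg a ha g.2.2
    -- an atom below t but not below g
    obtain ⟨b, hb, hbt, hbg⟩ := exists_atom_le_of_not_le hch hatom (g.2.1.lt.not_ge)
    -- map coatoms of g to coatoms of t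
    have hmap : ∀ g' : {g' : L | g' ⋖ g.1 ∧ a ≤ g'}, g'.1 ⊔ b ∈ H := by
      intro g'
      have hbg' : ¬ b ≤ g'.1 := fun hle => hbg (hle.trans g'.2.1.le)
      have hcov : g'.1 ⋖ g'.1 ⊔ b := exchange hch hsm hb hbg'
      have hrk : r (g'.1 ⊔ b) = n := by
        have h1 := hr.2 _ _ hcov
        have h2 := hr.2 _ _ g'.2.1
        omega
      refine ⟨covBy_of_le_rank hch hr (sup_le (g'.2.1.le.trans g.2.1.le) hbt) (by omega),
        g'.2.2.trans le_sup_left⟩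
    have hinj : Function.Injective
        (fun g' : {g' : L | g' ⋖ g.1 ∧ a ≤ g'} => (⟨g'.1 ⊔ b, hmap g'⟩ : H)) := by
      intro g1 g2 hxy
      have heq : g1.1 ⊔ b = g2.1 ⊔ b := Subtype.ext_iff.1 hxy
      set y := g1.1 ⊔ b with hy
      have hgy : ¬ g.1 ≤ y := by
        intro hle
        have hyt : y ⋖ t := (hmap g1).1
        rcases lt_or_eq_of_le hle with h' | h'
        · exact g.2.1.2 h' hyt.lt
        · exact hbg (h' ▸ le_sup_right)
      have key : ∀ g' : {g' : L | g' ⋖ g.1 ∧ a ≤ g'}, g'.1 ≤ y → g'.1 = g.1 ⊓ y := by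
        intro g' hg'y
        have h1 : g'.1 ≤ g.1 ⊓ y := le_inf g'.2.1.le hg'y
        rcases lt_or_eq_of_le h1 with h' | h'
        · exact absurd (g'.2.1.2 h' (lt_of_le_of_ne inf_le_left fun e => hgy (e ▸ inf_le_right)))
            (fun x => x)
        · exact h'
      have e1 : g1.1 = g.1 ⊓ y := key g1 le_sup_left
      have e2 : g2.1 = g.1 ⊓ y := key g2 (heq ▸ le_sup_left)
      exact Subtype.ext (e1.trans e2.symm)
    exact lt_irrefl (#L) (lt_of_le_of_lt (hIH.trans (mk_le_of_injective hinj)) hH)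

end count

section greedy

/-- Greedy transfinite matching: if `#α ≤ κ`, `κ` regular, and each `H a` has at least `κ`
elements, then there is an injective choice function. -/
lemma greedy {α β : Type u} {κ : Cardinal.{u}} (hκ : κ.IsRegular) (hα : #α ≤ κ)
    (H : α → Set β) (hH : ∀ a, κ ≤ #(H a)) :
    ∃ f : α → β, Function.Injective f ∧ ∀ a, f a ∈ H a := by
  obtain ⟨e⟩ : Nonempty (α ↪ κ.ord.ToType) := by
    rw [← Cardinal.le_def, Cardinal.mk_toType, Cardinal.card_ord]
    exact hα
  set O := κ.ord.ToType
  let s : α → α → Prop := fun x y => e x < e y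
  have wf : WellFounded s :=
    InvImage.wf (fun a => e a) (IsWellFounded.wf (α := O) (r := (· < ·)))
  have hsmallIio : ∀ a : α, #{b : α // s b a} < κ := by
    intro a
    have h1 : #{b : α // s b a} ≤ #(Set.Iio (e a)) := by
      refine mk_le_of_injective
        (f := fun b : {b : α // s b a} => (⟨e b.1, b.2⟩ : Set.Iio (e a))) ?_
      intro x y hxy
      simp only [Subtype.mk.injEq] at hxy
      exact Subtype.ext (e.injective (by have h := congrArg Subtype.val hxy; exact h))
    exact h1.trans_lt (Cardinal.mk_Iio_ord_toType (e a))
  have key : ∀ (a : α) (ih : ∀ b, s b a → β),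
      (H a \ Set.range (fun b : {b : α // s b a} => ih b.1 b.2)).Nonempty := by
    intro a ih
    rw [Set.nonempty_iff_ne_empty]
    intro hempty
    have hsub : H a ⊆ Set.range (fun b : {b : α // s b a} => ih b.1 b.2) :=
      Set.diff_eq_empty.1 hempty
    have h1 : κ ≤ #(Set.range (fun b : {b : α // s b a} => ih b.1 b.2)) :=
      (hH a).trans (mk_le_mk_of_subset hsub)
    exact absurd (h1.trans mk_range_le) (hsmallIio a).not_ge
  let F : α → β := wf.fix (fun a ih => (key a ih).choose)
  have hF : ∀ a : α, F a = (key a (fun b _ => F b)).choose := fun a =>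
    wf.fix_eq (fun a ih => (key a ih).choose) a
  have hmem : ∀ a : α, F a ∈ H a \ Set.range (fun b : {b : α // s b a} => F b.1) := by
    intro a
    rw [hF a]
    exact (key a (fun b _ => F b)).choose_spec
  refine ⟨F, ?_, fun a => (hmem a).1⟩
  have hne : ∀ {x y : α}, s x y → F x ≠ F y := by
    intro x y hxy h
    exact (hmem y).2 ⟨⟨x, hxy⟩, h⟩
  intro x y h
  by_contra hne'
  have hee : e x ≠ e y := fun hexy => hne' (e.injective hexy)
  rcases hee.lt_or_gt with hlt | hlt
  · exact hne hlt h
  · exact hne hlt h.symm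

end greedy

end GeomMatch

/-- An infinite geometric lattice of finite height of regular cardinality in which every
rank-2 interval `[0,x]` has cardinality smaller than that of the lattice has a matching. -/
theorem regular_cardinality_geometric_lattice_matching {L : Type u} [CompleteLattice L]
    (hL : IsGeomLatFH L) (hinf : Infinite L) (r : L → ℕ) (hr : IsRankFn r)
    (hsmall : ∀ x : L, r x = 2 → Cardinal.mk (Set.Iic x) < Cardinal.mk L)
    (hreg : (Cardinal.mk L).IsRegular) :
    HasMatching L := by
  classical
  obtain ⟨hlub, hglb, hch, hsm, hatom⟩ := hL
  rcases Nat.lt_or_ge (r ⊤) 3 with hn | hn3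
  · rcases Nat.lt_or_ge (r ⊤) 2 with h1 | h2
    · -- rank at most 1 : the lattice is finite, contradiction
      exfalso
      have hall : ∀ x : L, x = ⊥ ∨ x = ⊤ := by
        intro x
        rcases eq_or_ne x ⊤ with rfl | hx
        · exact Or.inr rfl
        · have hlt : x < ⊤ := lt_of_le_of_ne le_top hx
          have := GeomMatch.rank_lt_of_lt hch hr hlt
          exact Or.inl (GeomMatch.eq_bot_of_rank hch hr (by omega))
      have hfin : (Set.univ : Set L).Finite := by
        refine Set.Finite.subset (Set.toFinite {⊥, ⊤}) fun x _ => ?_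
        rcases hall x with h | h
        · exact Or.inl h
        · exact Or.inr h
      have : Finite L := Set.finite_univ_iff.1 hfin
      exact (not_finite_iff_infinite.2 hinf) this
    · -- rank exactly 2 : atoms are coatoms, match each atom to itself
      have h2' : r ⊤ = 2 := by omega
      have hco : ∀ a : {a : L // IsAtom a}, IsCoatom a.1 := by
        intro a
        have ha1 := GeomMatch.isAtom_rank hch hr a.2
        exact covBy_top_iff.1 (GeomMatch.covBy_of_le_rank hch hr le_top (by omega))
      refine ⟨fun a => ⟨a.1, hco a⟩, ?_, fun a => le_rfl⟩
      intro x y hxy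
      simp only [Subtype.mk.injEq] at hxy
      exact Subtype.ext hxy
  · -- rank at least 3 : greedy matching using the counting lemma
    have hI : #(Set.Iic (⊤ : L)) = #L := by rw [Set.Iic_top]; exact Cardinal.mk_univ
    have hcount := GeomMatch.count hch hsm hatom hr hsmall hreg (r ⊤) hn3 ⊤ rfl hI
    obtain ⟨f, hfinj, hfmem⟩ := GeomMatch.greedy hreg (Cardinal.mk_subtype_le _)
      (fun a : {a : L // IsAtom a} => {g : L | g ⋖ ⊤ ∧ a.1 ≤ g})
      (fun a => hcount a.1 a.2 le_top)
    refine ⟨fun a => ⟨f a, covBy_top_iff.1 (hfmem a).1⟩, ?_, fun a => (hfmem a).2⟩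
    intro x y hxy
    simp only [Subtype.mk.injEq] at hxy
    exact hfinj hxy
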